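/- arXiv:0704.0838 — 3 statements merged into one kernel-verified Lean document; each statement's English description precedes it below -/
import Mathlib

section
/- Let θ_i = p(1−p)^{i−1} for i ≥ 1 with 0 < p < 1 (geometric distribution). Then for every positive integer m, ∑_{i>m} θ_i = (1−p)^m, and ∑_{i>m} θ_i·log₂ i ≤ (1−p)^m·(log₂(m+1) + (log₂ e)·(1−p)/p). -/
/-- Tail estimates for the geometric distribution `θ_i = p(1−p)^{i−1}` (`i ≥ 1`):
`∑_{i>m} θ_i = (1−p)^m` and
`∑_{i>m} θ_i log₂ i ≤ (1−p)^m (log₂(m+1) + (log₂ e)(1−p)/p)`. -/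
theorem stmt_8 (p : ℝ) (hp : 0 < p) (hp1 : p < 1) (m : ℕ) (hm : 0 < m) :
    (∑' i : ℕ, p * (1 - p) ^ (m + i) = (1 - p) ^ m) ∧
    (∑' i : ℕ, p * (1 - p) ^ (m + i) * Real.logb 2 ((m + 1 + i : ℕ) : ℝ) ≤
      (1 - p) ^ m *
        (Real.logb 2 ((m : ℝ) + 1) + Real.logb 2 (Real.exp 1) * (1 - p) / p)) := by
  have hq0 : (0:ℝ) < 1 - p := by linarith
  have hq1 : 1 - p < 1 := by linarith
  have hqa : ‖(1 - p : ℝ)‖ < 1 := by rw [Real.norm_eq_abs, abs_of_pos hq0]; exact hq1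
  have hlog2 : (0:ℝ) < Real.log 2 := Real.log_pos (by norm_num)
  set L := Real.logb 2 ((m : ℝ) + 1) with hL
  set C := Real.logb 2 (Real.exp 1) with hC
  have hCval : C = 1 / Real.log 2 := by
    rw [hC, Real.logb, Real.log_exp, one_div]
  -- Part 1
  have hrw : ∀ i : ℕ, p * (1 - p) ^ (m + i) = (p * (1 - p) ^ m) * (1 - p) ^ i := by
    intro i; rw [pow_add]; ring
  have h1 : ∑' i : ℕ, p * (1 - p) ^ (m + i) = (1 - p) ^ m := by
    simp_rw [hrw]
    rw [tsum_mul_left, tsum_geometric_of_lt_one hq0.le hq1]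
    have : 1 - (1 - p) = p := by ring
    rw [this]
    field_simp
  refine ⟨h1, ?_⟩
  -- summability
  have hs0 : Summable (fun i : ℕ => (1 - p) ^ i) := summable_geometric_of_lt_one hq0.le hq1
  have hsi : Summable (fun i : ℕ => (i : ℝ) * (1 - p) ^ i) := by
    have := summable_pow_mul_geometric_of_norm_lt_one (R := ℝ) 1 hqa
    simpa using this
  have hsf : Summable (fun i : ℕ => p * (1 - p) ^ (m + i) * (L + C * i)) := by
    have heq : ∀ i : ℕ, p * (1 - p) ^ (m + i) * (L + C * i)
        = (p * (1 - p) ^ m * L) * (1 - p) ^ i + (p * (1 - p) ^ m * C) * ((i : ℝ) * (1 - p) ^ i) := by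
      intro i; rw [pow_add]; ring
    simp_rw [heq]
    exact (hs0.mul_left _).add (hsi.mul_left _)
  -- pointwise bound
  have hbound : ∀ i : ℕ, p * (1 - p) ^ (m + i) * Real.logb 2 ((m + 1 + i : ℕ) : ℝ)
      ≤ p * (1 - p) ^ (m + i) * (L + C * i) := by
    intro i
    have hnn : (0:ℝ) ≤ p * (1 - p) ^ (m + i) := by positivity
    refine mul_le_mul_of_nonneg_left ?_ hnn
    have hcast : ((m + 1 + i : ℕ) : ℝ) = (m : ℝ) + 1 + i := by push_cast; ring
    rw [hcast]
    have hm1 : (0:ℝ) < (m : ℝ) + 1 := by positivity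
    have hpos : (0:ℝ) < (m : ℝ) + 1 + i := by positivity
    have key : Real.log ((m : ℝ) + 1 + i) ≤ Real.log ((m : ℝ) + 1) + i := by
      have h := Real.log_le_sub_one_of_pos
        (show (0:ℝ) < ((m : ℝ) + 1 + i) / ((m : ℝ) + 1) by positivity)
      rw [Real.log_div (by positivity) (by positivity)] at h
      have hfrac : ((m : ℝ) + 1 + i) / ((m : ℝ) + 1) - 1 = (i : ℝ) / ((m : ℝ) + 1) := by
        field_simp
        ring
      rw [hfrac] at h
      have hdiv : (i : ℝ) / ((m : ℝ) + 1) ≤ (i : ℝ) :=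
        div_le_self (Nat.cast_nonneg i) (by linarith [Nat.cast_nonneg (α := ℝ) m])
      linarith
    rw [Real.logb, hL, Real.logb, hCval]
    rw [div_add' _ _ _ hlog2.ne', div_le_div_iff_of_pos_right hlog2]
    calc Real.log ((m : ℝ) + 1 + i) ≤ Real.log ((m : ℝ) + 1) + i := key
      _ = Real.log ((m : ℝ) + 1) + 1 / Real.log 2 * i * Real.log 2 := by
          field_simp
  have hsL : Summable (fun i : ℕ => p * (1 - p) ^ (m + i) * Real.logb 2 ((m + 1 + i : ℕ) : ℝ)) := by
    refine Summable.of_nonneg_of_le (fun i => ?_) hbound hsf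
    have : (0:ℝ) ≤ Real.logb 2 ((m + 1 + i : ℕ) : ℝ) := by
      apply Real.logb_nonneg (by norm_num)
      have : (1:ℕ) ≤ m + 1 + i := by omega
      exact_mod_cast this
    positivity
  calc ∑' i : ℕ, p * (1 - p) ^ (m + i) * Real.logb 2 ((m + 1 + i : ℕ) : ℝ)
      ≤ ∑' i : ℕ, p * (1 - p) ^ (m + i) * (L + C * i) := Summable.tsum_le_tsum hbound hsL hsf
    _ = (1 - p) ^ m * (L + C * (1 - p) / p) := by
        have heq : ∀ i : ℕ, p * (1 - p) ^ (m + i) * (L + C * i)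
            = (p * (1 - p) ^ m * L) * (1 - p) ^ i
              + (p * (1 - p) ^ m * C) * ((i : ℝ) * (1 - p) ^ i) := by
          intro i; rw [pow_add]; ring
        simp_rw [heq]
        rw [Summable.tsum_add (hs0.mul_left _) (hsi.mul_left _), tsum_mul_left, tsum_mul_left,
          tsum_geometric_of_lt_one hq0.le hq1, tsum_coe_mul_geometric_of_norm_lt_one hqa]
        have h1p : 1 - (1 - p) = p := by ring
        rw [h1p]
        field_simp
end

section
/- Let x^n be a sequence of n symbols from {1,…,k}, let n_x(i) be the count of symbol i, and let θ̂_M = (θ̂_{1,M},…,θ̂_{k,M}) be a maximizer of ∏_i φ_i^{n_x(i)} over all monotonic probability vectors φ_1 ≥ φ_2 ≥ … ≥ φ_k > 0, where k is the maximal symbol occurring in x^n (so every i ≤ k with n_x(i) ≥ 1 contributes). Then the largest component satisfies θ̂_{1,M} ≥ n_x(1)/n. -/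
open Finset

/-- The number of occurrences of symbol `i` in the sequence `x` of length `n`. -/
def cnt (n : ℕ) (x : Fin n → ℕ) (i : ℕ) : ℕ :=
  (Finset.univ.filter fun t => x t = i).card

set_option maxHeartbeats 1000000 in
/-- The monotonic ML estimator assigns the most likely symbol probability at least
its empirical frequency `n_x(1)/n`. -/
theorem stmt_10 (n k : ℕ) (hn : 0 < n) (hk : 0 < k) (x : Fin n → ℕ)
    (hx : ∀ t, 1 ≤ x t ∧ x t ≤ k) (hxk : ∃ t, x t = k)
    (θM : ℕ → ℝ)
    (hmono : ∀ i ∈ Finset.Ico 1 k, θM (i + 1) ≤ θM i)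
    (hpos : ∀ i ∈ Finset.Icc 1 k, 0 < θM i)
    (hsum : ∑ i ∈ Finset.Icc 1 k, θM i = 1)
    (hmax : ∀ φ : ℕ → ℝ,
      (∀ i ∈ Finset.Ico 1 k, φ (i + 1) ≤ φ i) →
      (∀ i ∈ Finset.Icc 1 k, 0 < φ i) →
      (∑ i ∈ Finset.Icc 1 k, φ i = 1) →
      ∏ i ∈ Finset.Icc 1 k, φ i ^ cnt n x i ≤
        ∏ i ∈ Finset.Icc 1 k, θM i ^ cnt n x i) :
    (cnt n x 1 : ℝ) / n ≤ θM 1 := by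
  by_contra hcon
  push_neg at hcon
  have h1k : 1 ∈ Finset.Icc 1 k := by simp [Finset.mem_Icc]; omega
  have hθ1 : 0 < θM 1 := hpos 1 h1k
  set n1 : ℕ := cnt n x 1 with hn1def
  -- total count is n
  have htot : ∑ i ∈ Finset.Icc 1 k, cnt n x i = n := by
    have h := Finset.card_eq_sum_card_fiberwise
      (s := (Finset.univ : Finset (Fin n))) (t := Finset.Icc 1 k) (f := x)
      (fun t _ => by simpa [Finset.mem_Icc] using hx t)
    simpa [cnt] using h.symm
  have hsplit : Finset.Icc 1 k = insert 1 (Finset.Icc 2 k) := by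
    ext a; simp only [Finset.mem_Icc, Finset.mem_insert]; omega
  have h1not : (1:ℕ) ∉ Finset.Icc 2 k := by simp
  set S : ℕ := ∑ i ∈ Finset.Icc 2 k, cnt n x i with hSdef
  have hnS : n1 + S = n := by
    rw [hsplit, Finset.sum_insert h1not] at htot; exact htot
  have hn1n : n1 ≤ n := by omega
  have hsum2 : ∑ i ∈ Finset.Icc 2 k, θM i = 1 - θM 1 := by
    rw [hsplit, Finset.sum_insert h1not] at hsum; linarith
  -- key numeric facts
  have hkey : (n : ℝ) * θM 1 < n1 := by
    have h := (lt_div_iff₀ (by exact_mod_cast hn : (0:ℝ) < n)).mp hcon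
    linarith
  have hθ1lt1 : θM 1 < 1 := by
    have hn1n' : (n1 : ℝ) ≤ n := by exact_mod_cast hn1n
    have hnpos : (0:ℝ) < n := by exact_mod_cast hn
    nlinarith
  set c : ℝ := (n1 : ℝ) * (1 - θM 1) / θM 1 with hcdef
  have hSn : (S : ℝ) = (n : ℝ) - n1 := by
    have : (n1 : ℝ) + S = n := by exact_mod_cast hnS
    linarith
  have hcS : (S : ℝ) < c := by
    rw [hcdef, lt_div_iff₀ hθ1]
    nlinarith
  have hS0 : (0:ℝ) ≤ S := Nat.cast_nonneg S
  have hc0 : (0:ℝ) < c := lt_of_le_of_lt hS0 hcS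
  -- choose epsilon
  set ε : ℝ := min (1/2) ((c - S) / (2 * (c * S + 1))) with hεdef
  have hD : (0:ℝ) < c * S + 1 := by positivity
  have hε0 : 0 < ε := by
    apply lt_min (by norm_num)
    exact div_pos (by linarith) (by positivity)
  have hεhalf : ε ≤ 1/2 := min_le_left _ _
  have hε1 : ε < 1 := lt_of_le_of_lt hεhalf (by norm_num)
  have hεb : c * S * ε ≤ (c - S) / 2 := by
    have h1 : ε ≤ (c - S) / (2 * (c * S + 1)) := min_le_right _ _
    have h2 : c * S * ε ≤ (c * S + 1) * ε := by nlinarith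
    have h3 : (c * S + 1) * ε ≤ (c * S + 1) * ((c - S) / (2 * (c * S + 1))) :=
      mul_le_mul_of_nonneg_left h1 hD.le
    have h4 : (c * S + 1) * ((c - S) / (2 * (c * S + 1))) = (c - S) / 2 := by
      field_simp
    linarith
  -- define the perturbed distribution
  set φ : ℕ → ℝ := fun i => if i = 1 then θM 1 + ε * (1 - θM 1) else (1 - ε) * θM i
    with hφdef
  have hφmono : ∀ i ∈ Finset.Ico 1 k, φ (i + 1) ≤ φ i := by
    intro i hi
    simp only [Finset.mem_Ico] at hi
    by_cases h1 : i = 1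
    · subst h1
      have h2k : 2 ∈ Finset.Icc 1 k := by simp only [Finset.mem_Icc]; omega
      have hθ2 : 0 < θM 2 := hpos 2 h2k
      have hθ21 : θM 2 ≤ θM 1 := hmono 1 (by simp only [Finset.mem_Ico]; omega)
      have hne : (1:ℕ) + 1 ≠ 1 := by omega
      simp only [hφdef, if_neg hne, if_pos rfl]
      nlinarith
    · have hne : i + 1 ≠ 1 := by omega
      simp only [hφdef, if_neg h1, if_neg hne]
      have := hmono i (by simp only [Finset.mem_Ico]; omega)
      nlinarith
  have hφpos : ∀ i ∈ Finset.Icc 1 k, 0 < φ i := by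
    intro i hi
    by_cases h1 : i = 1
    · subst h1
      simp only [hφdef, if_pos rfl]
      nlinarith
    · simp only [hφdef, if_neg h1]
      exact mul_pos (by linarith) (hpos i hi)
  have hφsum : ∑ i ∈ Finset.Icc 1 k, φ i = 1 := by
    rw [hsplit, Finset.sum_insert h1not]
    have heq : ∑ i ∈ Finset.Icc 2 k, φ i = ∑ i ∈ Finset.Icc 2 k, (1 - ε) * θM i := by
      apply Finset.sum_congr rfl
      intro i hi
      have hne : i ≠ 1 := by simp only [Finset.mem_Icc] at hi; omega
      simp only [hφdef, if_neg hne]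
    rw [heq, ← Finset.mul_sum, hsum2]
    simp only [hφdef, if_pos rfl]
    ring
  have hprod := hmax φ hφmono hφpos hφsum
  -- rewrite the product inequality
  have hP : (0:ℝ) < ∏ i ∈ Finset.Icc 2 k, θM i ^ cnt n x i := by
    apply Finset.prod_pos
    intro i hi
    have : i ∈ Finset.Icc 1 k := by simp only [Finset.mem_Icc] at hi ⊢; omega
    exact pow_pos (hpos i this) _
  set P : ℝ := ∏ i ∈ Finset.Icc 2 k, θM i ^ cnt n x i with hPdef
  have hLHS : ∏ i ∈ Finset.Icc 1 k, φ i ^ cnt n x i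
      = (θM 1 + ε * (1 - θM 1)) ^ n1 * ((1 - ε) ^ S * P) := by
    rw [hsplit, Finset.prod_insert h1not]
    have h1 : φ 1 = θM 1 + ε * (1 - θM 1) := by simp only [hφdef, if_pos rfl]
    have h2 : ∏ i ∈ Finset.Icc 2 k, φ i ^ cnt n x i
        = ∏ i ∈ Finset.Icc 2 k, ((1 - ε) ^ cnt n x i * θM i ^ cnt n x i) := by
      apply Finset.prod_congr rfl
      intro i hi
      have hne : i ≠ 1 := by simp only [Finset.mem_Icc] at hi; omega
      simp only [hφdef, if_neg hne, mul_pow]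
    rw [h1, h2, Finset.prod_mul_distrib, Finset.prod_pow_eq_pow_sum]
  have hRHS : ∏ i ∈ Finset.Icc 1 k, θM i ^ cnt n x i = θM 1 ^ n1 * P := by
    rw [hsplit, Finset.prod_insert h1not]
  rw [hLHS, hRHS] at hprod
  have hmain : (θM 1 + ε * (1 - θM 1)) ^ n1 * (1 - ε) ^ S ≤ θM 1 ^ n1 := by
    have := (mul_le_mul_iff_of_pos_right hP).mp (by linarith [hprod] :
      (θM 1 + ε * (1 - θM 1)) ^ n1 * (1 - ε) ^ S * P ≤ θM 1 ^ n1 * P)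
    exact this
  -- divide by θM 1 ^ n1
  have hθpow : (0:ℝ) < θM 1 ^ n1 := pow_pos hθ1 _
  set b : ℝ := ε * (1 - θM 1) / θM 1 with hbdef
  have hb0 : 0 < b := by
    apply div_pos (by nlinarith) hθ1
  have hfrac : (θM 1 + ε * (1 - θM 1)) ^ n1 = θM 1 ^ n1 * (1 + b) ^ n1 := by
    rw [← mul_pow]
    congr 1
    rw [hbdef]
    field_simp
  have hmain2 : (1 + b) ^ n1 * (1 - ε) ^ S ≤ 1 := by
    rw [hfrac] at hmain
    have := (mul_le_mul_iff_of_pos_left hθpow).mp (by linarith [hmain] :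
      θM 1 ^ n1 * ((1 + b) ^ n1 * (1 - ε) ^ S) ≤ θM 1 ^ n1 * 1)
    linarith
  -- Bernoulli bounds
  have hB1 : 1 + (n1 : ℝ) * b ≤ (1 + b) ^ n1 := one_add_mul_le_pow (by linarith) n1
  have hB2 : 1 + (S : ℝ) * (-ε) ≤ (1 - ε) ^ S := by
    have := one_add_mul_le_pow (a := -ε) (by linarith) S
    rw [sub_eq_add_neg]; exact this
  have hcb : (n1 : ℝ) * b = c * ε := by
    rw [hbdef, hcdef]; field_simp
  -- S * ε < 1/2
  have hSε : (S : ℝ) * ε < 1/2 := by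
    rcases eq_or_lt_of_le hS0 with h | h
    · rw [← h]; norm_num
    · nlinarith
  have hle : (1 + c * ε) * (1 - (S:ℝ) * ε) ≤ (1 + b) ^ n1 * (1 - ε) ^ S := by
    apply mul_le_mul
    · rw [← hcb]; exact hB1
    · have : 1 + (S:ℝ) * (-ε) = 1 - S * ε := by ring
      linarith [hB2]
    · linarith
    · positivity
  have hfinal : (1 + c * ε) * (1 - (S:ℝ) * ε) ≤ 1 := le_trans hle hmain2
  nlinarith [mul_le_mul_of_nonneg_right hεb hε0.le, mul_pos hε0 hε0]
end

section
/- Let x^n be a sequence over the alphabet {1,…,k}, where k = max{x_1,…,x_n}, and let θ̂_M be the monotonic ML estimator, i.e., a maximizer of ∏_{i=1}^k φ_i^{n_x(i)} over monotonic probability vectors φ_1 ≥ … ≥ φ_k ≥ 0 with all components corresponding to occurring letters positive. Then the smallest component satisfies θ̂_{k,M} ≥ 1/(k·n). -/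
open Finset

set_option maxHeartbeats 1000000

/-- Lemma 1: the smallest component of the monotonic ML estimator for a sequence
over `{1,…,k}` (with `k` the maximal occurring symbol) is at least `1/(k·n)`. -/
theorem stmt_11 (n k : ℕ) (hn : 0 < n) (hk : 0 < k) (x : Fin n → ℕ)
    (hx : ∀ t, 1 ≤ x t ∧ x t ≤ k) (hxk : 1 ≤ cnt n x k)
    (θM : ℕ → ℝ)
    (hmono : ∀ i ∈ Finset.Ico 1 k, θM (i + 1) ≤ θM i)
    (hnn : ∀ i ∈ Finset.Icc 1 k, 0 ≤ θM i)
    (hposocc : ∀ i ∈ Finset.Icc 1 k, 1 ≤ cnt n x i → 0 < θM i)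
    (hsum : ∑ i ∈ Finset.Icc 1 k, θM i = 1)
    (hmax : ∀ φ : ℕ → ℝ,
      (∀ i ∈ Finset.Ico 1 k, φ (i + 1) ≤ φ i) →
      (∀ i ∈ Finset.Icc 1 k, 0 ≤ φ i) →
      (∀ i ∈ Finset.Icc 1 k, 1 ≤ cnt n x i → 0 < φ i) →
      (∑ i ∈ Finset.Icc 1 k, φ i = 1) →
      ∏ i ∈ Finset.Icc 1 k, φ i ^ cnt n x i ≤
        ∏ i ∈ Finset.Icc 1 k, θM i ^ cnt n x i) :
    1 / ((k : ℝ) * n) ≤ θM k := by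
  by_contra hcon
  push_neg at hcon
  have hkS : k ∈ Finset.Icc 1 k := Finset.mem_Icc.mpr ⟨hk, le_refl k⟩
  have hkR : (0:ℝ) < k := by exact_mod_cast hk
  have hnR : (0:ℝ) < n := by exact_mod_cast hn
  have hnR1 : (1:ℝ) ≤ n := by exact_mod_cast hn
  set m := cnt n x k with hm
  set t := θM k with htdef
  have ht : 0 < t := hposocc k hkS hxk
  set r : ℝ := 1 / ((k:ℝ) * t) with hrdef
  have hrn : (n:ℝ) < r := by
    rw [hrdef, lt_div_iff₀ (by positivity)]
    have h1 : (k:ℝ) * n * t < (k:ℝ) * n * (1 / ((k:ℝ)*n)) :=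
      mul_lt_mul_of_pos_left hcon (by positivity)
    have h2 : (k:ℝ) * n * (1 / ((k:ℝ)*n)) = 1 := by field_simp
    nlinarith
  have hr1 : (1:ℝ) < r := lt_of_le_of_lt hnR1 hrn
  have hmn : m ≤ n := by
    have h := Finset.card_filter_le (Finset.univ : Finset (Fin n)) (fun t => x t = k)
    simpa [cnt, hm] using h
  have hm1R : (1:ℝ) ≤ (m:ℝ) := by exact_mod_cast hxk
  have hmnR : (m:ℝ) ≤ (n:ℝ) := by exact_mod_cast hmn
  have hsumcnt : ∑ i ∈ Finset.Icc 1 k, cnt n x i = n := by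
    have h := Finset.card_eq_sum_card_fiberwise
      (f := x) (s := (Finset.univ : Finset (Fin n))) (t := Finset.Icc 1 k)
      (fun a _ => Finset.mem_Icc.mpr ⟨(hx a).1, (hx a).2⟩)
    simp only [Finset.card_univ, Fintype.card_fin] at h
    simpa [cnt] using h.symm
  -- constants
  set A : ℝ := (m:ℝ) * r - n with hA
  set B : ℝ := ((n:ℝ) - m) * ((m:ℝ) * (r - 1)) with hB
  have hA0 : 0 < A := by nlinarith
  have hB0 : 0 ≤ B := by nlinarith
  -- a suitable small ε
  obtain ⟨ε, hε0, hεn, hεB⟩ : ∃ ε : ℝ, 0 < ε ∧ ε * n ≤ 1 ∧ ε * B < A := by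
    refine ⟨A / ((n:ℝ) * A + B), ?_, ?_, ?_⟩
    · have hden : 0 < (n:ℝ) * A + B := by nlinarith
      exact div_pos hA0 hden
    · have hden : 0 < (n:ℝ) * A + B := by nlinarith
      rw [div_mul_eq_mul_div, div_le_one hden]; nlinarith
    · have hden : 0 < (n:ℝ) * A + B := by nlinarith
      rw [div_mul_eq_mul_div, div_lt_iff₀ hden]
      nlinarith [mul_pos hA0 hA0, mul_le_mul_of_nonneg_right hnR1 (le_of_lt (mul_pos hA0 hA0))]
  have hε1 : ε ≤ 1 := by nlinarith
  have h1ε : 0 ≤ 1 - ε := by linarith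
  -- the perturbed distribution
  set φ : ℕ → ℝ := fun i => (1 - ε) * θM i + ε / k with hφ
  have hφmono : ∀ i ∈ Finset.Ico 1 k, φ (i + 1) ≤ φ i := by
    intro i hi
    have h := hmono i hi
    have h2 := mul_le_mul_of_nonneg_left h h1ε
    simp only [hφ]
    linarith
  have hφnn : ∀ i ∈ Finset.Icc 1 k, 0 ≤ φ i := by
    intro i hi
    have h := mul_nonneg h1ε (hnn i hi)
    have h2 : (0:ℝ) ≤ ε / k := by positivity
    simp only [hφ]
    linarith
  have hφpos : ∀ i ∈ Finset.Icc 1 k, 1 ≤ cnt n x i → 0 < φ i := by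
    intro i hi _
    have h := mul_nonneg h1ε (hnn i hi)
    have h2 : (0:ℝ) < ε / k := by positivity
    simp only [hφ]
    linarith
  have hφsum : ∑ i ∈ Finset.Icc 1 k, φ i = 1 := by
    simp only [hφ]
    rw [Finset.sum_add_distrib, ← Finset.mul_sum, hsum, Finset.sum_const, Nat.card_Icc,
      Nat.add_sub_cancel, nsmul_eq_mul]
    field_simp
    ring
  have key := hmax φ hφmono hφnn hφpos hφsum
  -- split the products at k
  set E := (Finset.Icc 1 k).erase k with hE
  set P : ℝ := ∏ i ∈ E, θM i ^ cnt n x i with hP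
  have hPpos : 0 < P := by
    rw [hP]
    apply Finset.prod_pos
    intro i hi
    rcases Nat.eq_zero_or_pos (cnt n x i) with h0 | h1
    · simp [h0]
    · exact pow_pos (hposocc i (Finset.mem_of_mem_erase hi) h1) _
  have hsumE : ∑ i ∈ E, cnt n x i = n - m := by
    have h2 := Finset.add_sum_erase (Finset.Icc 1 k) (cnt n x) hkS
    rw [hE]
    omega
  have hsplitθ : ∏ i ∈ Finset.Icc 1 k, θM i ^ cnt n x i = t ^ m * P :=
    (Finset.mul_prod_erase (Finset.Icc 1 k) (fun i => θM i ^ cnt n x i) hkS).symm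
  have hsplitφ : ∏ i ∈ Finset.Icc 1 k, φ i ^ cnt n x i
      = φ k ^ m * ∏ i ∈ E, φ i ^ cnt n x i :=
    (Finset.mul_prod_erase (Finset.Icc 1 k) (fun i => φ i ^ cnt n x i) hkS).symm
  -- lower bound for the erased product
  have hElb : (1 - ε) ^ (n - m) * P ≤ ∏ i ∈ E, φ i ^ cnt n x i := by
    have h1 : ∏ i ∈ E, ((1 - ε) * θM i) ^ cnt n x i ≤ ∏ i ∈ E, φ i ^ cnt n x i := by
      apply Finset.prod_le_prod
      · intro i hi
        exact pow_nonneg (mul_nonneg h1ε (hnn i (Finset.mem_of_mem_erase hi))) _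
      · intro i hi
        apply pow_le_pow_left₀ (mul_nonneg h1ε (hnn i (Finset.mem_of_mem_erase hi)))
        have hεk : (0:ℝ) ≤ ε / k := by positivity
        simp only [hφ]
        linarith
    calc (1 - ε) ^ (n - m) * P
        = ∏ i ∈ E, ((1 - ε) * θM i) ^ cnt n x i := by
          simp only [mul_pow, Finset.prod_mul_distrib, Finset.prod_pow_eq_pow_sum, hsumE, hP]
      _ ≤ ∏ i ∈ E, φ i ^ cnt n x i := h1
  -- combine
  have hφknn : 0 ≤ φ k := hφnn k hkS
  have hmain : φ k ^ m * (1 - ε) ^ (n - m) * P ≤ t ^ m * P := by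
    calc φ k ^ m * (1 - ε) ^ (n - m) * P
        = φ k ^ m * ((1 - ε) ^ (n - m) * P) := by ring
      _ ≤ φ k ^ m * ∏ i ∈ E, φ i ^ cnt n x i :=
          mul_le_mul_of_nonneg_left hElb (pow_nonneg hφknn _)
      _ = ∏ i ∈ Finset.Icc 1 k, φ i ^ cnt n x i := hsplitφ.symm
      _ ≤ ∏ i ∈ Finset.Icc 1 k, θM i ^ cnt n x i := key
      _ = t ^ m * P := hsplitθ
  have hmain2 : φ k ^ m * (1 - ε) ^ (n - m) ≤ t ^ m :=
    le_of_mul_le_mul_right (by linarith [hmain]) hPpos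
  -- rewrite φ k
  have hφk : φ k = t * (1 + ε * (r - 1)) := by
    simp only [hφ, hrdef]
    field_simp
    ring
  have htm : (0:ℝ) < t ^ m := pow_pos ht m
  rw [hφk, mul_pow, mul_assoc] at hmain2
  have hmain3 : (1 + ε * (r - 1)) ^ m * (1 - ε) ^ (n - m) ≤ 1 := by
    have h' : t ^ m * ((1 + ε * (r - 1)) ^ m * (1 - ε) ^ (n - m)) ≤ t ^ m * 1 := by
      rw [mul_one]; exact hmain2
    exact le_of_mul_le_mul_left h' htm
  -- Bernoulli bounds
  have hb1 : 1 + (m:ℝ) * (ε * (r - 1)) ≤ (1 + ε * (r - 1)) ^ m :=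
    one_add_mul_le_pow (by nlinarith) m
  have hb2 : 1 + ((n - m : ℕ):ℝ) * (-ε) ≤ (1 + (-ε)) ^ (n - m) :=
    one_add_mul_le_pow (by linarith) (n - m)
  have hcast : ((n - m : ℕ):ℝ) = (n:ℝ) - m := by
    rw [Nat.cast_sub hmn]
  rw [hcast] at hb2
  have hc1 : (0:ℝ) ≤ 1 + ((n:ℝ) - m) * (-ε) := by nlinarith
  have hd1 : (0:ℝ) ≤ 1 + (m:ℝ) * (ε * (r - 1)) := by nlinarith
  have hprod : (1 + (m:ℝ) * (ε * (r - 1))) * (1 + ((n:ℝ) - m) * (-ε))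
      ≤ (1 + ε * (r - 1)) ^ m * (1 - ε) ^ (n - m) := by
    have h := mul_le_mul hb1 hb2 hc1 (pow_nonneg (by nlinarith : (0:ℝ) ≤ 1 + ε * (r-1)) m)
    simpa [← sub_eq_add_neg] using h
  have hexp : (1 + (m:ℝ) * (ε * (r - 1))) * (1 + ((n:ℝ) - m) * (-ε))
      = 1 + ε * A - ε * (ε * B) := by
    rw [hA, hB]; ring
  have hfin : ε * (ε * B) < ε * A := mul_lt_mul_of_pos_left hεB hε0
  linarith [hprod, hmain3, hfin, hexp.ge, hexp.le]
end
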